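/- Let d ≥ 2 be an integer, c ∈ ℚ with c ≠ 0, and φ(z) = z^d + c. If α ∈ ℚ is preperiodic for φ, i.e. φ^[i](α) = φ^[j](α) for some natural numbers i ≠ j, then for every prime p one has d · max(−v_p(α), 0) = max(−v_p(c), 0), where v_p denotes the p-adic valuation on ℚ. -/

import Mathlib

section Aux

variable {p : ℕ} [Fact p.Prime] {d : ℕ} {c : ℚ}

private lemma val_step (hd : 2 ≤ d) (hc0 : c ≠ 0) {β : ℚ}
    (hβ : padicValRat p β < 0) (hlt : (d : ℤ) * padicValRat p β < padicValRat p c) :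
    padicValRat p (β ^ d + c) = (d : ℤ) * padicValRat p β := by
  have hβ0 : β ≠ 0 := by
    intro h; rw [h, padicValRat.zero] at hβ; exact absurd hβ (lt_irrefl 0)
  have hpow : padicValRat p (β ^ d) = (d : ℤ) * padicValRat p β := padicValRat.pow β
  have hne : β ^ d + c ≠ 0 := by
    intro h
    have hceq : c = -(β ^ d) := by linarith [h, neg_eq_of_add_eq_zero_right h]
    rw [hceq, padicValRat.neg, hpow] at hlt
    exact absurd hlt (lt_irrefl _)
  rw [padicValRat.add_eq_of_lt hne (pow_ne_zero _ hβ0) hc0 (by rw [hpow]; exact hlt), hpow]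

private lemma val_iter (hd : 2 ≤ d) (hc0 : c ≠ 0) {β : ℚ}
    (hβ : padicValRat p β < 0) (hlt : (d : ℤ) * padicValRat p β < padicValRat p c) :
    ∀ k : ℕ,
      padicValRat p ((fun z : ℚ => z ^ d + c)^[k] β) < 0 ∧
      (d : ℤ) * padicValRat p ((fun z : ℚ => z ^ d + c)^[k] β) < padicValRat p c ∧
      padicValRat p ((fun z : ℚ => z ^ d + c)^[k] β) ≤ padicValRat p β := by
  intro k
  induction k with
  | zero => exact ⟨hβ, hlt, le_refl _⟩
  | succ n ih =>
    obtain ⟨h1, h2, h3⟩ := ih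
    have hstep : padicValRat p ((fun z : ℚ => z ^ d + c)^[n+1] β)
        = (d : ℤ) * padicValRat p ((fun z : ℚ => z ^ d + c)^[n] β) := by
      rw [Function.iterate_succ_apply']
      exact val_step hd hc0 h1 h2
    have hd2 : (2:ℤ) ≤ (d:ℤ) := by exact_mod_cast hd
    have hnn : (0:ℤ) ≤ ((d:ℤ) - 2) * (-padicValRat p ((fun z : ℚ => z ^ d + c)^[n] β)) :=
      mul_nonneg (by linarith) (by linarith)
    have hdV : (d : ℤ) * padicValRat p ((fun z : ℚ => z ^ d + c)^[n] β) < 0 := by nlinarith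
    have hnn2 : (0:ℤ) ≤ ((d:ℤ) - 2) * (-((d:ℤ) * padicValRat p ((fun z : ℚ => z ^ d + c)^[n] β))) :=
      mul_nonneg (by linarith) (by linarith)
    refine ⟨?_, ?_, ?_⟩
    · rw [hstep]; nlinarith
    · rw [hstep]; nlinarith
    · rw [hstep]; nlinarith

private lemma no_bad_preperiodic (hd : 2 ≤ d) (hc0 : c ≠ 0) {β : ℚ}
    (hβ : padicValRat p β < 0) (hlt : (d : ℤ) * padicValRat p β < padicValRat p c)
    (hpre : ∃ i j : ℕ, i ≠ j ∧
      (fun z : ℚ => z ^ d + c)^[i] β = (fun z : ℚ => z ^ d + c)^[j] β) : False := by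
  obtain ⟨i, j, hij, heq⟩ := hpre
  wlog hij' : i < j generalizing i j
  · exact this j i hij.symm heq.symm (by omega)
  set φ : ℚ → ℚ := fun z : ℚ => z ^ d + c with hφ
  set γ : ℚ := φ^[i] β with hγ
  have hper : φ^[j - i] γ = γ := by
    rw [hγ, ← Function.iterate_add_apply]
    rw [show j - i + i = j by omega]
    exact heq.symm
  -- the valuation sequence of iterates of γ is strictly decreasing
  have key : ∀ k : ℕ, padicValRat p (φ^[k] γ) < 0 ∧
      (d : ℤ) * padicValRat p (φ^[k] γ) < padicValRat p c ∧
      padicValRat p (φ^[k] γ) ≤ padicValRat p γ := by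
    obtain ⟨h1, h2, h3⟩ := val_iter hd hc0 hβ hlt i
    exact val_iter hd hc0 h1 h2
  have hanti : StrictAnti (fun k : ℕ => padicValRat p (φ^[k] γ)) := by
    apply strictAnti_nat_of_succ_lt
    intro n
    obtain ⟨h1, h2, _⟩ := key n
    have hstep : padicValRat p (φ^[n+1] γ)
        = (d : ℤ) * padicValRat p (φ^[n] γ) := by
      rw [Function.iterate_succ_apply']
      exact val_step hd hc0 h1 h2
    have hd2 : (2:ℤ) ≤ (d:ℤ) := by exact_mod_cast hd
    have hnn : (0:ℤ) ≤ ((d:ℤ) - 2) * (-padicValRat p (φ^[n] γ)) :=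
      mul_nonneg (by linarith) (by linarith)
    rw [hstep]; nlinarith
  have hlt0 : padicValRat p (φ^[j - i] γ) < padicValRat p (φ^[0] γ) :=
    hanti (by omega : 0 < j - i)
  rw [hper] at hlt0
  simp at hlt0

end Aux

theorem preperiodic_local_height_condition (d : ℕ) (hd : 2 ≤ d) (c : ℚ) (hc : c ≠ 0)
    (α : ℚ) (hpre : ∃ i j : ℕ, i ≠ j ∧
      (fun z : ℚ => z ^ d + c)^[i] α = (fun z : ℚ => z ^ d + c)^[j] α) :
    ∀ p : ℕ, p.Prime →
      (d : ℤ) * max (-padicValRat p α) 0 = max (-padicValRat p c) 0 := by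
  intro p hp
  haveI : Fact p.Prime := ⟨hp⟩
  set φ : ℚ → ℚ := fun z : ℚ => z ^ d + c with hφ
  -- preperiodicity transfers to φ α
  have hpre' : ∃ i j : ℕ, i ≠ j ∧ φ^[i] (φ α) = φ^[j] (φ α) := by
    obtain ⟨i, j, hij, heq⟩ := hpre
    refine ⟨i, j, hij, ?_⟩
    rw [← Function.iterate_succ_apply, ← Function.iterate_succ_apply,
      Function.iterate_succ_apply', Function.iterate_succ_apply', heq]
  by_cases h1 : padicValRat p α < 0
  · -- α has negative valuation
    have hα0 : α ≠ 0 := by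
      intro h; rw [h, padicValRat.zero] at h1; exact absurd h1 (lt_irrefl 0)
    by_cases h2 : (d : ℤ) * padicValRat p α < padicValRat p c
    · exact absurd hpre (fun h => no_bad_preperiodic hd hc h1 h2 h)
    · by_cases h3 : padicValRat p c < (d : ℤ) * padicValRat p α
      · -- then v(φ α) = v c, and φ α is "bad"
        exfalso
        have hd2 : (2:ℤ) ≤ (d:ℤ) := by exact_mod_cast hd
        have hvc : padicValRat p c < 0 := by nlinarith
        have hpow : padicValRat p (α ^ d) = (d : ℤ) * padicValRat p α :=
          padicValRat.pow α
        have hne : α ^ d + c ≠ 0 := by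
          intro h
          have hceq : c = -(α ^ d) := neg_eq_of_add_eq_zero_right h ▸ rfl
          rw [hceq, padicValRat.neg, hpow] at h3
          exact absurd h3 (lt_irrefl _)
        have hval : padicValRat p (φ α) = padicValRat p c := by
          show padicValRat p (α ^ d + c) = _
          rw [add_comm]
          exact padicValRat.add_eq_of_lt (by rwa [add_comm]) hc (pow_ne_zero _ hα0)
            (by rw [hpow]; exact h3)
        have hbad1 : padicValRat p (φ α) < 0 := by rw [hval]; exact hvc
        have hbad2 : (d : ℤ) * padicValRat p (φ α) < padicValRat p c := by
          rw [hval]; nlinarith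
        exact no_bad_preperiodic hd hc hbad1 hbad2 hpre'
      · -- v c = d * v α, both negative
        have heq : padicValRat p c = (d : ℤ) * padicValRat p α := by omega
        have hd2 : (2:ℤ) ≤ (d:ℤ) := by exact_mod_cast hd
        rw [max_eq_left (by linarith : (0:ℤ) ≤ -padicValRat p α),
          max_eq_left (by nlinarith : (0:ℤ) ≤ -padicValRat p c)]
        rw [heq]; ring
  · -- α has nonnegative valuation
    push_neg at h1
    by_cases h2 : padicValRat p c < 0
    · -- then v(φ α) = v c < 0, φ α is bad
      exfalso
      have hd2 : (2:ℤ) ≤ (d:ℤ) := by exact_mod_cast hd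
      have hval : padicValRat p (φ α) = padicValRat p c := by
        by_cases hα0 : α = 0
        · show padicValRat p (α ^ d + c) = _
          rw [hα0, zero_pow (by omega : d ≠ 0), zero_add]
        · have hpow : padicValRat p (α ^ d) = (d : ℤ) * padicValRat p α :=
            padicValRat.pow α
          have hlt : padicValRat p c < padicValRat p (α ^ d) := by
            rw [hpow]; nlinarith
          have hne : c + α ^ d ≠ 0 := by
            intro h
            have hceq : c = -(α ^ d) := neg_eq_of_add_eq_zero_left h ▸ rfl
            rw [hceq, padicValRat.neg] at hlt
            exact absurd hlt (lt_irrefl _)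
          show padicValRat p (α ^ d + c) = _
          rw [add_comm]
          exact padicValRat.add_eq_of_lt hne hc (pow_ne_zero _ hα0) hlt
      have hbad1 : padicValRat p (φ α) < 0 := by rw [hval]; exact h2
      have hbad2 : (d : ℤ) * padicValRat p (φ α) < padicValRat p c := by
        rw [hval]; nlinarith
      exact no_bad_preperiodic hd hc hbad1 hbad2 hpre'
    · push_neg at h2
      rw [max_eq_right (by linarith : -padicValRat p α ≤ 0),
        max_eq_right (by linarith : -padicValRat p c ≤ 0)]
      ring
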